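/- arXiv:0806.1327 — 4 statements merged into one kernel-verified Lean document; each statement's English description precedes it below -/
import Mathlib

section
/- For every natural number n > 1, the Cesàro means (1/N) ∑_{m=1}^{N} ∏_{p prime, p ∣ m} (1 + 1/p^{n-1}) converge, as N → ∞, to ζ(n)/ζ(2n), where ζ is the Riemann zeta function. -/
open Filter Finset Topology

lemma squarefree_prod_primes {s : Finset ℕ} (hs : ∀ p ∈ s, p.Prime) :
    Squarefree (∏ p ∈ s, p) := by
  induction s using Finset.induction with
  | empty => simpa using squarefree_one
  | @insert a s hp ih =>
    rw [Finset.prod_insert hp]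
    have ha : a.Prime := hs a (mem_insert_self a s)
    have hrest : Squarefree (∏ p ∈ s, p) := ih fun p hps => hs p (mem_insert_of_mem hps)
    refine (Nat.squarefree_mul ?_).mpr ⟨ha.squarefree, hrest⟩
    rw [Nat.Prime.coprime_iff_not_dvd ha, ha.prime.dvd_finset_prod_iff]
    rintro ⟨q, hq, hdvd⟩
    have : a = q := (Nat.prime_dvd_prime_iff_eq ha (hs q (mem_insert_of_mem hq))).mp hdvd
    exact hp (this ▸ hq)

noncomputable def fA (n : ℕ) : ArithmeticFunction ℂ :=
  ⟨fun d => if d = 0 then 0 else 1 / (d : ℂ) ^ (n - 1), by simp⟩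

lemma fA_apply (n d : ℕ) (hd : d ≠ 0) : fA n d = 1 / (d : ℂ) ^ (n - 1) := by
  simp [fA, hd]

lemma fA_mult (n : ℕ) : (fA n).IsMultiplicative := by
  constructor
  · simp [fA]
  · intro a b _
    rcases eq_or_ne a 0 with rfl | ha
    · simp [fA]
    rcases eq_or_ne b 0 with rfl | hb
    · simp [fA]
    rw [fA_apply n _ (Nat.mul_ne_zero ha hb), fA_apply n a ha, fA_apply n b hb]
    push_cast
    rw [mul_pow]
    field_simp

lemma prod_eq_sum_divisors (n : ℕ) {m : ℕ} (hm : m ≠ 0) :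
    ∏ p ∈ m.primeFactors, (1 + 1 / (p : ℂ) ^ (n - 1)) =
      ∑ d ∈ (∏ p ∈ m.primeFactors, p).divisors, fA n d := by
  have hprimes : ∀ p ∈ m.primeFactors, p.Prime := fun p hp => Nat.prime_of_mem_primeFactors hp
  have hsq : Squarefree (∏ p ∈ m.primeFactors, p) := squarefree_prod_primes hprimes
  rw [← (fA_mult n).prodPrimeFactors_one_add_of_squarefree hsq,
    Nat.primeFactors_prod hprimes]
  refine Finset.prod_congr rfl fun p hp => ?_
  rw [fA_apply n p (hprimes p hp).ne_zero]

lemma mem_rad_divisors {m d : ℕ} (hm : m ≠ 0) :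
    d ∈ (∏ p ∈ m.primeFactors, p).divisors ↔ Squarefree d ∧ d ∣ m := by
  have hprimes : ∀ p ∈ m.primeFactors, p.Prime := fun p hp => Nat.prime_of_mem_primeFactors hp
  have hsq : Squarefree (∏ p ∈ m.primeFactors, p) := squarefree_prod_primes hprimes
  rw [Nat.mem_divisors]
  constructor
  · rintro ⟨hdvd, hne⟩
    exact ⟨hsq.squarefree_of_dvd hdvd, hdvd.trans (Nat.prod_primeFactors_dvd m)⟩
  · rintro ⟨hd, hdvd⟩
    refine ⟨?_, hsq.ne_zero⟩
    calc d = ∏ p ∈ d.primeFactors, p := (Nat.prod_primeFactors_of_squarefree hd).symm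
    _ ∣ ∏ p ∈ m.primeFactors, p :=
      Finset.prod_dvd_prod_of_subset _ _ _ (Nat.primeFactors_mono hdvd hm)

lemma key_identity (n N : ℕ) :
    ∑ m ∈ Finset.Icc 1 N, ∏ p ∈ m.primeFactors, (1 + 1 / (p : ℂ) ^ (n - 1)) =
      ∑ d ∈ Finset.Icc 1 N,
        (if Squarefree d then (1 / (d : ℂ) ^ (n - 1)) * ((N / d : ℕ) : ℂ) else 0) := by
  have step1 : ∀ m ∈ Finset.Icc 1 N,
      ∏ p ∈ m.primeFactors, (1 + 1 / (p : ℂ) ^ (n - 1)) =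
        ∑ d ∈ Finset.Icc 1 N, (if Squarefree d ∧ d ∣ m then fA n d else 0) := by
    intro m hm
    rw [Finset.mem_Icc] at hm
    have hm0 : m ≠ 0 := by omega
    rw [prod_eq_sum_divisors n hm0, ← Finset.sum_filter]
    refine Finset.sum_congr ?_ (fun _ _ => rfl)
    ext d
    rw [Finset.mem_filter, Finset.mem_Icc, mem_rad_divisors hm0]
    constructor
    · rintro ⟨hd, hdvd⟩
      have h1 : 1 ≤ d := (Nat.pos_of_dvd_of_pos hdvd (by omega))
      exact ⟨⟨h1, (Nat.le_of_dvd (by omega) hdvd).trans hm.2⟩, hd, hdvd⟩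
    · rintro ⟨_, h⟩; exact h
  rw [Finset.sum_congr rfl step1, Finset.sum_comm]
  refine Finset.sum_congr rfl fun d hd => ?_
  rw [Finset.mem_Icc] at hd
  have hd0 : d ≠ 0 := by omega
  by_cases hsq : Squarefree d
  · simp only [hsq, true_and, if_true]
    rw [← Finset.sum_filter, Finset.sum_const, show Finset.Icc 1 N = Finset.Ioc 0 N from rfl]
    rw [Nat.Ioc_filter_dvd_card_eq_div N d, nsmul_eq_mul, mul_comm]
    congr 1
    simp [fA, hd0]
  · simp [hsq]

lemma div_cast_tendsto (d : ℕ) (hd : 0 < d) :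
    Tendsto (fun N : ℕ => ((N / d : ℕ) : ℂ) / (N : ℂ)) atTop (𝓝 (1 / (d : ℂ))) := by
  have hre : Tendsto (fun N : ℕ => ((N / d : ℕ) : ℝ) / (N : ℝ)) atTop (𝓝 (1 / (d : ℝ))) := by
    have heq : ∀ᶠ N : ℕ in atTop, ((N / d : ℕ) : ℝ) / (N : ℝ)
        = 1 / (d : ℝ) - ((N % d : ℕ) : ℝ) / ((d : ℝ) * N) := by
      filter_upwards [eventually_ge_atTop 1] with N hN
      have hN0 : (N : ℝ) ≠ 0 := by positivity
      have hd0 : (d : ℝ) ≠ 0 := by positivity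
      have hdm : (d : ℝ) * ((N / d : ℕ) : ℝ) + ((N % d : ℕ) : ℝ) = (N : ℝ) := by
        exact_mod_cast Nat.div_add_mod N d
      field_simp
      nlinarith [hdm]
    rw [tendsto_congr' heq]
    have h0 : Tendsto (fun N : ℕ => ((N % d : ℕ) : ℝ) / ((d : ℝ) * N)) atTop (𝓝 0) := by
      apply squeeze_zero (fun N => div_nonneg (by positivity) (by positivity)) (g := fun N : ℕ => (1 : ℝ) / N)
      · intro N
        rcases Nat.eq_zero_or_pos N with rfl | hN
        · simp
        have h1 : ((N % d : ℕ) : ℝ) ≤ (d : ℝ) := by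
          exact_mod_cast (Nat.mod_lt N hd).le
        rw [div_le_div_iff₀ (by positivity) (by positivity)]
        calc ((N % d : ℕ) : ℝ) * N ≤ (d : ℝ) * N := by
              apply mul_le_mul_of_nonneg_right h1 (by positivity)
          _ = 1 * ((d : ℝ) * N) := by ring
      · exact tendsto_one_div_atTop_nhds_zero_nat
    simpa using tendsto_const_nhds.sub h0
  have := (Complex.continuous_ofReal.tendsto _).comp hre
  simpa [Function.comp_def] using this

noncomputable def FF (n N d : ℕ) : ℂ :=
  if d ∈ Finset.Icc 1 N ∧ Squarefree d then (1 / (d : ℂ) ^ (n - 1)) * ((N / d : ℕ) : ℂ) / N else 0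

noncomputable def gg (n d : ℕ) : ℂ := if Squarefree d then 1 / (d : ℂ) ^ n else 0

lemma tendsto_FF (n : ℕ) (hn : 1 < n) :
    Tendsto (fun N => ∑' d, FF n N d) atTop (𝓝 (∑' d, gg n d)) := by
  apply tendsto_tsum_of_dominated_convergence (bound := fun d : ℕ => 1 / (d : ℝ) ^ n)
  · exact Real.summable_one_div_nat_pow.mpr hn
  · intro d
    by_cases hsq : Squarefree d
    · have hd1 : 1 ≤ d := hsq.ne_zero.bot_lt
      have heq : ∀ᶠ N : ℕ in atTop, FF n N d
          = (1 / (d : ℂ) ^ (n - 1)) * (((N / d : ℕ) : ℂ) / (N : ℂ)) := by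
        filter_upwards [eventually_ge_atTop d] with N hN
        rw [FF, if_pos ⟨Finset.mem_Icc.mpr ⟨hd1, hN⟩, hsq⟩, mul_div_assoc]
      rw [tendsto_congr' heq, gg, if_pos hsq]
      have := ((div_cast_tendsto d hd1).const_mul (1 / (d : ℂ) ^ (n - 1)))
      convert this using 2
      rw [div_mul_div_comm, one_mul, ← pow_succ]
      congr 2
      omega
    · have heq : ∀ N, FF n N d = 0 := by
        intro N; rw [FF, if_neg (by tauto)]
      rw [funext heq, gg, if_neg hsq]
      exact tendsto_const_nhds
  · filter_upwards with N
    intro d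
    have hb0 : (0:ℝ) ≤ 1 / (d : ℝ) ^ n := div_nonneg one_pos.le (by positivity)
    rw [FF]
    split_ifs with h
    · obtain ⟨hmem, hsq⟩ := h
      rw [Finset.mem_Icc] at hmem
      have hd1 : (1:ℝ) ≤ (d:ℝ) := by exact_mod_cast hmem.1
      have hN1 : (0:ℝ) < (N:ℝ) := by
        have : 1 ≤ N := le_trans hmem.1 hmem.2
        positivity
      have hnorm : ‖(1 / (d : ℂ) ^ (n - 1)) * ((N / d : ℕ) : ℂ) / (N : ℂ)‖
          = (1 / (d : ℝ) ^ (n - 1)) * ((N / d : ℕ) : ℝ) / (N : ℝ) := by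
        simp [norm_div, norm_mul, norm_pow, Complex.norm_natCast]
      rw [hnorm]
      have hc : ((N / d : ℕ) : ℝ) ≤ (N : ℝ) / d := Nat.cast_div_le
      calc (1 / (d : ℝ) ^ (n - 1)) * ((N / d : ℕ) : ℝ) / (N : ℝ)
          ≤ (1 / (d : ℝ) ^ (n - 1)) * ((N : ℝ) / d) / (N : ℝ) := by
            gcongr
        _ = 1 / ((d : ℝ) ^ (n - 1) * d) := by field_simp
        _ = 1 / (d : ℝ) ^ n := by rw [← pow_succ]; congr 2; omega
    · simpa using hb0

lemma tsum_gg (n : ℕ) (hn : 1 < n) :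
    ∑' d, gg n d = riemannZeta n / riemannZeta (2 * n) := by
  have hg1 : gg n 1 = 1 := by simp [gg]
  have hgmul : ∀ {a b : ℕ}, Nat.Coprime a b → gg n (a * b) = gg n a * gg n b := by
    intro a b hab
    rcases eq_or_ne a 0 with rfl | ha
    · simp only [Nat.coprime_zero_left] at hab; simp [hab, gg]
    rcases eq_or_ne b 0 with rfl | hb
    · simp only [Nat.coprime_zero_right] at hab; simp [hab, gg]
    simp only [gg, Nat.squarefree_mul hab]
    by_cases hsa : Squarefree a <;> by_cases hsb : Squarefree b <;>
      simp [hsa, hsb, mul_pow, div_mul_div_comm, mul_comm]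
  have hbound : ∀ d : ℕ, ‖gg n d‖ ≤ 1 / (d : ℝ) ^ n := by
    intro d
    rw [gg]
    split_ifs with h
    · simp [norm_div, norm_pow, Complex.norm_natCast, le_refl]
    · simpa using div_nonneg one_pos.le (by positivity)
  have hsum : Summable (fun d => ‖gg n d‖) :=
    (Real.summable_one_div_nat_pow.mpr hn).of_nonneg_of_le (fun _ => norm_nonneg _) hbound
  have hg0 : gg n 0 = 0 := by simp [gg, not_squarefree_zero]
  have hEP := EulerProduct.eulerProduct_hasProd hg1 hgmul hsum hg0
  -- compute local factors
  have hfac : ∀ p : Nat.Primes, (∑' e : ℕ, gg n ((p : ℕ) ^ e)) = 1 + ((p : ℂ) ^ n)⁻¹ := by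
    intro p
    have hp := p.prop
    rw [tsum_eq_sum (s := {0, 1}) ?_]
    · rw [Finset.sum_pair (by norm_num)]
      simp [gg, pow_one, hp.squarefree, one_div]
    · intro e he
      simp only [Finset.mem_insert, Finset.mem_singleton] at he
      push_neg at he
      rw [gg, if_neg]
      rw [Nat.squarefree_pow_iff hp.ne_one he.1]
      tauto
  have hEP2 : HasProd (fun p : Nat.Primes => 1 + ((p : ℂ) ^ n)⁻¹) (∑' d, gg n d) :=
    (funext hfac : _) ▸ hEP
  have hre1 : 1 < ((n : ℂ)).re := by
    rw [Complex.natCast_re]; exact_mod_cast hn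
  have hre2 : 1 < (2 * (n : ℂ)).re := by
    have : (2 * (n : ℂ)) = ((2 * n : ℕ) : ℂ) := by push_cast; ring
    rw [this, Complex.natCast_re]
    exact_mod_cast by omega
  have hz1 := riemannZeta_eulerProduct_hasProd hre1
  have hz2 := riemannZeta_eulerProduct_hasProd hre2
  have hcast1 : ∀ p : Nat.Primes, (p : ℂ) ^ (-(n : ℂ)) = ((p : ℂ) ^ n)⁻¹ := by
    intro p
    rw [Complex.cpow_neg, Complex.cpow_natCast]
  have hcast2 : ∀ p : Nat.Primes, (p : ℂ) ^ (-(2 * (n : ℂ))) = (((p : ℂ) ^ n)⁻¹) ^ 2 := by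
    intro p
    have : (2 * (n : ℂ)) = ((2 * n : ℕ) : ℂ) := by push_cast; ring
    rw [this, Complex.cpow_neg, Complex.cpow_natCast, mul_comm 2 n, pow_mul, ← inv_pow]
  have hx : ∀ p : Nat.Primes, ‖((p : ℂ) ^ n)⁻¹‖ < 1 := by
    intro p
    rw [norm_inv, norm_pow, Complex.norm_natCast]
    have h2 : (2 : ℝ) ≤ (p : ℕ) := by exact_mod_cast p.prop.two_le
    have : (1 : ℝ) < ((p : ℕ) : ℝ) ^ n := by
      calc (1:ℝ) < 2 := one_lt_two
      _ ≤ ((p : ℕ) : ℝ) := h2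
      _ ≤ ((p : ℕ) : ℝ) ^ n := le_self_pow₀ (by linarith) (by omega)
    rw [inv_lt_one_iff₀]
    right; exact this
  have hmulEP := hEP2.mul hz2
  have hkey : (fun p : Nat.Primes => (1 + ((p : ℂ) ^ n)⁻¹) * (1 - (p : ℂ) ^ (-(2 * (n : ℂ))))⁻¹)
      = fun p : Nat.Primes => (1 - (p : ℂ) ^ (-(n : ℂ)))⁻¹ := by
    funext p
    rw [hcast2 p, hcast1 p]
    have hxp := hx p
    generalize ((p : ℂ) ^ n)⁻¹ = x at hxp ⊢
    have hx1 : 1 - x ≠ 0 := by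
      intro h
      have he : x = 1 := by linear_combination -h
      rw [he] at hxp; simp at hxp
    have hx2 : 1 + x ≠ 0 := by
      intro h
      have he : x = -1 := by linear_combination h
      rw [he] at hxp; simp at hxp
    have hsq : 1 - x ^ 2 = (1 - x) * (1 + x) := by ring
    rw [hsq, mul_inv, ← mul_assoc, mul_comm (1+x), mul_assoc, mul_inv_cancel₀ hx2, mul_one]
  rw [hkey] at hmulEP
  have heq := hmulEP.unique hz1
  have hz2ne : riemannZeta (2 * (n : ℂ)) ≠ 0 := riemannZeta_ne_zero_of_one_lt_re hre2
  rw [eq_div_iff hz2ne]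
  exact heq

lemma glue (n N : ℕ) :
    (1 / (N : ℂ)) * ∑ m ∈ Finset.Icc 1 N,
        ∏ p ∈ m.primeFactors, (1 + 1 / (p : ℂ) ^ (n - 1)) = ∑' d, FF n N d := by
  rw [key_identity n N, tsum_eq_sum (s := Finset.Icc 1 N)
    (fun d hd => by rw [FF, if_neg (by tauto)]), Finset.mul_sum]
  refine Finset.sum_congr rfl fun d hd => ?_
  rw [FF]
  by_cases hsq : Squarefree d
  · rw [if_pos hsq, if_pos ⟨hd, hsq⟩]; ring
  · rw [if_neg hsq, if_neg (by tauto), mul_zero]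

theorem cesaro_euler_like_plus_nat (n : ℕ) (hn : 1 < n) :
    Tendsto (fun N : ℕ =>
        (1 / (N : ℂ)) * ∑ m ∈ Finset.Icc 1 N,
          ∏ p ∈ m.primeFactors, (1 + 1 / (p : ℂ) ^ (n - 1)))
      atTop (nhds (riemannZeta n / riemannZeta (2 * n))) := by
  have heq := funext (glue n)
  rw [heq, ← tsum_gg n hn]
  exact tendsto_FF n hn
end

section
/- For every complex number s with real part greater than 1, the Cesàro means (1/N) ∑_{m=1}^{N} ∏_{p prime, p ∣ m} (1 + 1/p^{s-1}) converge, as N → ∞, to ζ(s)/ζ(2s), where ζ is the Riemann zeta function. -/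
open Filter Finset Complex ArithmeticFunction
open scoped ArithmeticFunction.Moebius

namespace CesaroAux

lemma squarePart_spec (n : ℕ) (hn : n ≠ 0) :
    ∃ r : ℕ, r ≠ 0 ∧ (∀ e : ℕ, e ∣ r ↔ e ^ 2 ∣ n) ∧ (r = 1 ↔ Squarefree n) := by
  set r := ∏ p ∈ n.primeFactors, p ^ (n.factorization p / 2) with hr
  have hr0 : r ≠ 0 := Finset.prod_ne_zero_iff.mpr fun p hp =>
    pow_ne_zero _ (Nat.prime_of_mem_primeFactors hp).pos.ne'
  have hrf : ∀ q, r.factorization q = n.factorization q / 2 := by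
    intro q
    rw [hr, Nat.factorization_prod (fun p hp =>
      pow_ne_zero _ (Nat.prime_of_mem_primeFactors hp).pos.ne')]
    rw [Finset.sum_apply']
    rw [Finset.sum_congr rfl (fun p hp => by
      rw [(Nat.prime_of_mem_primeFactors hp).factorization_pow, Finsupp.single_apply])]
    rw [Finset.sum_ite_eq']
    by_cases hq : q ∈ n.primeFactors
    · simp [hq]
    · simp only [hq, if_false]
      rw [← Nat.support_factorization] at hq
      rw [Finsupp.notMem_support_iff.mp hq]
      rfl
  have hdvd : ∀ e : ℕ, e ∣ r ↔ e ^ 2 ∣ n := by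
    intro e
    rcases eq_or_ne e 0 with rfl | he
    · simp [hr0, hn, zero_pow]
    · rw [← Nat.factorization_le_iff_dvd he hr0, ← Nat.factorization_le_iff_dvd
        (pow_ne_zero 2 he) hn, Finsupp.le_def, Finsupp.le_def]
      constructor
      · intro h q
        have := h q
        rw [hrf q, Nat.le_div_iff_mul_le two_pos] at this
        rw [Nat.factorization_pow, Finsupp.smul_apply, smul_eq_mul]
        omega
      · intro h q
        have := h q
        rw [Nat.factorization_pow, Finsupp.smul_apply, smul_eq_mul] at this
        rw [hrf q, Nat.le_div_iff_mul_le two_pos]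
        omega
  refine ⟨r, hr0, hdvd, ?_⟩
  rw [Nat.eq_one_iff_not_exists_prime_dvd, Nat.squarefree_iff_prime_squarefree]
  constructor
  · intro h p hp hpn
    exact h p hp ((hdvd p).mpr (by rwa [sq]))
  · intro h p hp hpr
    exact h p hp (by rw [← sq]; exact (hdvd p).mp hpr)

end CesaroAux

namespace CesaroAux

open scoped Classical in
/-- `μ(√n)` if `n` is a square, else 0. -/
noncomputable def sqmoeb : ℕ → ℂ := fun n => if IsSquare n then ((μ n.sqrt : ℤ) : ℂ) else 0

lemma sqmoeb_sq (e : ℕ) : sqmoeb (e ^ 2) = ((μ e : ℤ) : ℂ) := by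
  rw [sqmoeb, if_pos ⟨e, sq e⟩, Nat.sqrt_eq']

lemma norm_sqmoeb_le_one (n : ℕ) : ‖sqmoeb n‖ ≤ 1 := by
  rw [sqmoeb]
  split
  · rw [Complex.norm_intCast]
    exact_mod_cast abs_moebius_le_one
  · simp

lemma sum_sqmoeb (n : ℕ) (hn : n ≠ 0) :
    ∑ d ∈ n.divisors, sqmoeb d = if Squarefree n then 1 else 0 := by
  classical
  obtain ⟨r, hr0, hdvd, hsq⟩ := squarePart_spec n hn
  have h1 : ∑ d ∈ n.divisors, sqmoeb d = ∑ e ∈ r.divisors, ((μ e : ℤ) : ℂ) := by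
    rw [show (∑ d ∈ n.divisors, sqmoeb d)
        = ∑ d ∈ n.divisors.filter IsSquare, ((μ d.sqrt : ℤ) : ℂ) by
      rw [Finset.sum_filter]
      apply Finset.sum_congr rfl
      intro d _
      rw [sqmoeb]]
    refine Finset.sum_nbij' (fun d => d.sqrt) (fun e => e ^ 2) ?_ ?_ ?_ ?_ ?_
    · intro d hd
      obtain ⟨hd1, e, he⟩ := Finset.mem_filter.mp hd
      obtain ⟨hdn, -⟩ := Nat.mem_divisors.mp hd1
      subst he
      show (e * e).sqrt ∈ r.divisors
      rw [Nat.sqrt_eq]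
      exact Nat.mem_divisors.mpr ⟨(hdvd e).mpr (by rwa [sq]), hr0⟩
    · intro e he
      obtain ⟨her, -⟩ := Nat.mem_divisors.mp he
      refine Finset.mem_filter.mpr ⟨Nat.mem_divisors.mpr ⟨(hdvd e).mp her, hn⟩, ⟨e, sq e⟩⟩
    · intro d hd
      obtain ⟨-, e, he⟩ := Finset.mem_filter.mp hd
      subst he
      show (e * e).sqrt ^ 2 = e * e
      rw [Nat.sqrt_eq, sq]
    · intro e _
      exact Nat.sqrt_eq' e
    · intro d _
      rfl
  rw [h1]
  have h2 : ∑ e ∈ r.divisors, (μ e : ℤ) = if r = 1 then 1 else 0 := by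
    rw [← ArithmeticFunction.coe_mul_zeta_apply, ArithmeticFunction.moebius_mul_coe_zeta,
      ArithmeticFunction.one_apply]
  have h3 : ∑ e ∈ r.divisors, ((μ e : ℤ) : ℂ) = ((∑ e ∈ r.divisors, (μ e : ℤ) : ℤ) : ℂ) := by
    push_cast; rfl
  rw [h3, h2]
  rcases eq_or_ne r 1 with h | h
  · rw [if_pos h, if_pos (hsq.mp h)]; norm_num
  · rw [if_neg h, if_neg (fun hsf => h (hsq.mpr hsf))]; norm_num

end CesaroAux

namespace CesaroAux

open scoped LSeries.notation

open scoped Classical in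
/-- Indicator of squarefree numbers. -/
noncomputable def sqind : ℕ → ℂ := fun n => if Squarefree n then 1 else 0

lemma sqmoeb_summable {s : ℂ} (hs : 1 < s.re) : LSeriesSummable sqmoeb s := by
  refine LSeriesSummable_of_le_const_mul_rpow hs ⟨1, fun n _ => ?_⟩
  rw [sub_self, Real.rpow_zero, one_mul]
  exact norm_sqmoeb_le_one n

lemma sq_cpow (e : ℕ) (w : ℂ) : (((e ^ 2 : ℕ) : ℂ)) ^ w = ((e : ℂ) ^ w) ^ 2 := by
  push_cast
  rw [sq, sq, show ((e : ℂ) * e) = ((e : ℝ) : ℂ) * ((e : ℝ) : ℂ) by push_cast; ring,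
    Complex.mul_cpow_ofReal_nonneg e.cast_nonneg e.cast_nonneg]
  push_cast
  ring

lemma LSeries_sqmoeb {s : ℂ} : LSeries sqmoeb s = LSeries ↗μ (2 * s) := by
  have hinj : Function.Injective (fun e : ℕ => e ^ 2) := fun a b h => by
    simpa only [Nat.sqrt_eq'] using congrArg Nat.sqrt h
  have hsupp : Function.support (LSeries.term sqmoeb s) ⊆ Set.range (fun e : ℕ => e ^ 2) := by
    intro n hn
    rw [Function.mem_support, LSeries.term_def] at hn
    by_cases h0 : n = 0
    · simp [h0] at hn
    · rw [if_neg h0] at hn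
      have : sqmoeb n ≠ 0 := fun h => hn (by rw [h, zero_div])
      rw [sqmoeb] at this
      by_cases hsq : IsSquare n
      · obtain ⟨e, he⟩ := hsq
        exact ⟨e, by simpa [sq] using he.symm⟩
      · exact absurd (if_neg hsq) this
  have key : ∀ e : ℕ, LSeries.term sqmoeb s (e ^ 2) = LSeries.term ↗μ (2 * s) e := by
    intro e
    rcases eq_or_ne e 0 with rfl | he
    · simp [LSeries.term_def]
    · rw [LSeries.term_def, LSeries.term_def, if_neg (pow_ne_zero 2 he), if_neg he,
        sqmoeb_sq, sq_cpow, show (2 : ℂ) * s = (2 : ℕ) * s by norm_num, Complex.cpow_nat_mul]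
  rw [LSeries, LSeries, ← hinj.tsum_eq hsupp]
  exact tsum_congr key

end CesaroAux

namespace CesaroAux

open scoped LSeries.notation

lemma sqind_eq_conv : sqind = sqmoeb ⍟ (1 : ℕ → ℂ) := by
  classical
  funext n
  rcases eq_or_ne n 0 with rfl | hn
  · rw [sqind, LSeries.convolution_def]
    simp [not_squarefree_zero]
  · rw [LSeries.convolution_def]
    simp only [Pi.one_apply, mul_one]
    rw [show (∑ p ∈ n.divisorsAntidiagonal, sqmoeb p.1) = ∑ d ∈ n.divisors, sqmoeb d from
      Nat.sum_divisorsAntidiagonal (fun a _ => sqmoeb a), sum_sqmoeb n hn, sqind]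

lemma LSeries_sqind {s : ℂ} (hs : 1 < s.re) :
    LSeries sqind s = riemannZeta s / riemannZeta (2 * s) := by
  have h2s : 1 < (2 * s).re := by
    have h : (2 * s).re = 2 * s.re := by
      simp [Complex.mul_re]
    rw [h]; linarith
  have hz2 : riemannZeta (2 * s) ≠ 0 := riemannZeta_ne_zero_of_one_lt_re h2s
  have hmu : LSeries ↗μ (2 * s) = 1 / riemannZeta (2 * s) := by
    have h := LSeries_one_mul_Lseries_moebius h2s
    rw [LSeries_one_eq_riemannZeta h2s] at h
    rw [eq_div_iff hz2, mul_comm]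
    exact h
  rw [sqind_eq_conv, LSeries_convolution' (sqmoeb_summable hs) (LSeriesSummable_one_iff.mpr hs),
    LSeries_sqmoeb, hmu, LSeries_one_eq_riemannZeta hs]
  ring

open scoped Classical in
lemma tsum_sqind {s : ℂ} (hs : 1 < s.re) :
    ∑' d : ℕ, (if Squarefree d then 1 / (d : ℂ) ^ (s - 1) * (1 / (d : ℂ)) else 0)
      = riemannZeta s / riemannZeta (2 * s) := by
  rw [← LSeries_sqind hs, LSeries]
  apply tsum_congr
  intro d
  rw [LSeries.term_def, sqind]
  rcases eq_or_ne d 0 with rfl | hd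
  · simp [not_squarefree_zero]
  · rw [if_neg hd]
    by_cases hsf : Squarefree d
    · rw [if_pos hsf, if_pos hsf]
      have hd0 : (d : ℂ) ≠ 0 := Nat.cast_ne_zero.mpr hd
      have hpow : (d : ℂ) ^ s = (d : ℂ) ^ (s - 1) * d := by
        have h := Complex.cpow_add (x := (d : ℂ)) (s - 1) 1 hd0
        rwa [Complex.cpow_one, sub_add_cancel] at h
      rw [div_mul_div_comm, one_mul, hpow, one_div]
    · rw [if_neg hsf, if_neg hsf, zero_div]

end CesaroAux

namespace CesaroAux

lemma natCast_prod_cpow (t : Finset ℕ) (w : ℂ) :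
    ((∏ p ∈ t, p : ℕ) : ℂ) ^ w = ∏ p ∈ t, (p : ℂ) ^ w := by
  classical
  induction t using Finset.induction with
  | empty => simp
  | @insert a t ha ih =>
    rw [Finset.prod_insert ha, Finset.prod_insert ha, ← ih, Nat.cast_mul,
      show ((a : ℂ)) = (((a : ℝ)) : ℂ) by push_cast; rfl,
      show (((∏ p ∈ t, p : ℕ) : ℂ)) = ((((∏ p ∈ t, p : ℕ) : ℝ)) : ℂ) by push_cast; rfl,
      Complex.mul_cpow_ofReal_nonneg (Nat.cast_nonneg _) (Nat.cast_nonneg _)]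

lemma prod_primeFactors_eq_sum_sqfree_divisors {s : ℂ} (m : ℕ) (hm : m ≠ 0) :
    ∏ p ∈ m.primeFactors, (1 + 1 / (p : ℂ) ^ (s - 1))
      = ∑ d ∈ m.divisors.filter Squarefree, 1 / (d : ℂ) ^ (s - 1) := by
  classical
  rw [Nat.sum_divisors_filter_squarefree hm]
  have hpf : (UniqueFactorizationMonoid.normalizedFactors m).toFinset = m.primeFactors := by
    rw [Nat.factors_eq]
    rfl
  rw [hpf]
  calc ∏ p ∈ m.primeFactors, (1 + 1 / (p : ℂ) ^ (s - 1))
      = ∏ p ∈ m.primeFactors, (1 / (p : ℂ) ^ (s - 1) + 1) :=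
        Finset.prod_congr rfl fun p _ => add_comm _ _
    _ = ∑ t ∈ m.primeFactors.powerset,
          (∏ p ∈ t, 1 / (p : ℂ) ^ (s - 1)) * ∏ p ∈ m.primeFactors \ t, 1 :=
        Finset.prod_add _ _ _
    _ = ∑ t ∈ m.primeFactors.powerset, 1 / ((t.val.prod : ℕ) : ℂ) ^ (s - 1) := by
        apply Finset.sum_congr rfl
        intro t ht
        rw [Finset.prod_const_one, mul_one,
          show (t.val.prod) = ∏ p ∈ t, p from (Finset.prod_val t).symm ▸ rfl,
          natCast_prod_cpow, Finset.prod_div_distrib, Finset.prod_const_one]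

end CesaroAux

namespace CesaroAux

open scoped Classical in
lemma swap_sum {s : ℂ} (N : ℕ) :
    ∑ m ∈ Finset.Ioc 0 N, ∑ d ∈ m.divisors.filter Squarefree, 1 / (d : ℂ) ^ (s - 1)
      = ∑ d ∈ Finset.Ioc 0 N,
          (if Squarefree d then (1 / (d : ℂ) ^ (s - 1)) * ((N / d : ℕ) : ℂ) else 0) := by
  have step1 : ∀ m ∈ Finset.Ioc 0 N,
      ∑ d ∈ m.divisors.filter Squarefree, 1 / (d : ℂ) ^ (s - 1)
        = ∑ d ∈ Finset.Ioc 0 N,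
            (if d ∣ m ∧ Squarefree d then 1 / (d : ℂ) ^ (s - 1) else 0) := by
    intro m hm
    rw [Finset.mem_Ioc] at hm
    rw [← Finset.sum_filter]
    apply Finset.sum_congr _ (fun _ _ => rfl)
    ext d
    simp only [Finset.mem_filter, Nat.mem_divisors, Finset.mem_Ioc]
    constructor
    · rintro ⟨⟨hdm, -⟩, hsf⟩
      have hd0 : 0 < d := by
        rcases Nat.eq_zero_or_pos d with rfl | h
        · exact absurd (Nat.eq_zero_of_zero_dvd hdm) hm.1.ne'
        · exact h
      exact ⟨⟨hd0, (Nat.le_of_dvd hm.1 hdm).trans hm.2⟩, hdm, hsf⟩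
    · rintro ⟨-, hdm, hsf⟩
      exact ⟨⟨hdm, hm.1.ne'⟩, hsf⟩
  rw [Finset.sum_congr rfl step1, Finset.sum_comm]
  apply Finset.sum_congr rfl
  intro d _
  by_cases hsf : Squarefree d
  · simp only [hsf, and_true, if_true]
    rw [← Finset.sum_filter, Finset.sum_const, Nat.Ioc_filter_dvd_card_eq_div,
      nsmul_eq_mul, mul_comm]
  · simp [hsf]

open scoped Classical in
lemma finite_identity {s : ℂ} (N : ℕ) :
    (1 / (N : ℂ)) * ∑ m ∈ Finset.Icc 1 N,
        ∏ p ∈ m.primeFactors, (1 + 1 / (p : ℂ) ^ (s - 1))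
      = ∑' d : ℕ, (if Squarefree d ∧ d ∈ Finset.Ioc 0 N then
          (1 / (d : ℂ) ^ (s - 1)) * (((N / d : ℕ) : ℂ) / (N : ℂ)) else 0) := by
  rw [tsum_eq_sum (s := Finset.Ioc 0 N) (fun d hd => by
    rw [if_neg (fun h => hd h.2)])]
  rw [show Finset.Icc 1 N = Finset.Ioc 0 N from Finset.Icc_add_one_left_eq_Ioc 0 N]
  rw [Finset.sum_congr rfl (fun m hm =>
    prod_primeFactors_eq_sum_sqfree_divisors m (Finset.mem_Ioc.mp hm).1.ne')]
  rw [swap_sum, Finset.mul_sum]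
  apply Finset.sum_congr rfl
  intro d hd
  by_cases hsf : Squarefree d
  · rw [if_pos hsf, if_pos ⟨hsf, hd⟩]
    ring
  · rw [if_neg hsf, if_neg (fun h => hsf h.1), mul_zero]

end CesaroAux

namespace CesaroAux

lemma ratio_tendsto (d : ℕ) (hd : 0 < d) :
    Tendsto (fun N : ℕ => (((N / d : ℕ) : ℝ)) / (N : ℝ)) atTop (nhds (1 / (d : ℝ))) := by
  have hd0 : (d : ℝ) ≠ 0 := Nat.cast_pos.mpr hd |>.ne'
  have h1 : Tendsto (fun N : ℕ => ((N % d : ℕ) : ℝ) / (N : ℝ)) atTop (nhds 0) := by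
    apply squeeze_zero' (Filter.Eventually.of_forall fun N => by positivity)
      ?_ (tendsto_const_div_atTop_nhds_zero_nat (d : ℝ))
    filter_upwards [Filter.eventually_ge_atTop 1] with N hN
    have hN0 : (0 : ℝ) < (N : ℝ) := by exact_mod_cast hN
    gcongr
    exact (Nat.mod_lt N hd).le.trans (le_refl _) |>.trans (by exact_mod_cast le_refl (d:ℝ))
  have h2 : Tendsto (fun N : ℕ => (1 - ((N % d : ℕ) : ℝ) / (N : ℝ)) / (d : ℝ))
      atTop (nhds (1 / (d : ℝ))) := by
    have := (tendsto_const_nhds (x := (1:ℝ)) (f := atTop (α := ℕ))).sub h1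
    rw [sub_zero] at this
    exact this.div_const d
  apply h2.congr'
  filter_upwards [Filter.eventually_ge_atTop 1] with N hN
  have hN0 : (N : ℝ) ≠ 0 := by positivity
  have key : ((N % d : ℕ) : ℝ) + (d : ℝ) * ((N / d : ℕ) : ℝ) = (N : ℝ) := by
    exact_mod_cast Nat.mod_add_div N d
  field_simp
  nlinarith [key]

end CesaroAux

open CesaroAux in
open scoped Classical in
theorem cesaro_euler_like_plus_complex (s : ℂ) (hs : 1 < s.re) :
    Tendsto (fun N : ℕ =>
        (1 / (N : ℂ)) * ∑ m ∈ Finset.Icc 1 N,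
          ∏ p ∈ m.primeFactors, (1 + 1 / (p : ℂ) ^ (s - 1)))
      atTop (nhds (riemannZeta s / riemannZeta (2 * s))) := by
  have σpos : (0:ℝ) < s.re - 1 := by linarith
  set f : ℕ → ℕ → ℂ := fun N d => if Squarefree d ∧ d ∈ Finset.Ioc 0 N then
      (1 / (d : ℂ) ^ (s - 1)) * (((N / d : ℕ) : ℂ) / (N : ℂ)) else 0 with hf
  set g : ℕ → ℂ := fun d => if Squarefree d then 1 / (d : ℂ) ^ (s - 1) * (1 / (d : ℂ)) else 0
    with hg
  have hmain : Tendsto (fun N : ℕ => ∑' d, f N d) atTop (nhds (∑' d, g d)) := by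
    apply tendsto_tsum_of_dominated_convergence
      (bound := fun d : ℕ => (d : ℝ) ^ (-s.re))
      (Real.summable_nat_rpow.mpr (by linarith))
    · intro d
      by_cases hsf : Squarefree d
      · have hd0 : 0 < d := Nat.pos_of_ne_zero hsf.ne_zero
        have hc : Tendsto (fun N : ℕ => (((N / d : ℕ) : ℂ)) / (N : ℂ)) atTop
            (nhds (1 / (d : ℂ))) := by
          have h := (Complex.continuous_ofReal.tendsto (1 / (d : ℝ))).comp
            (ratio_tendsto d hd0)
          have hlim : ((1 / (d : ℝ) : ℝ) : ℂ) = 1 / (d : ℂ) := by push_cast; rfl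
          rw [hlim] at h
          exact h.congr (fun N => by simp only [Function.comp_apply]; push_cast; rfl)
        have hb := hc.const_mul (1 / (d : ℂ) ^ (s - 1))
        have hgd : g d = (1 / (d : ℂ) ^ (s - 1)) * (1 / (d : ℂ)) := by
          rw [hg]; exact if_pos hsf
        rw [hgd]
        apply hb.congr'
        filter_upwards [Filter.eventually_ge_atTop d] with N hN
        rw [hf]
        simp only
        rw [if_pos ⟨hsf, Finset.mem_Ioc.mpr ⟨hd0, hN⟩⟩]
      · have : ∀ N, f N d = 0 := fun N => by
          rw [hf]; simp only; rw [if_neg (fun h => hsf h.1)]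
        have hgd : g d = 0 := by rw [hg]; exact if_neg hsf
        rw [hgd]
        exact tendsto_const_nhds.congr (fun N => (this N).symm)
    · apply Filter.Eventually.of_forall
      intro N d
      by_cases hcond : Squarefree d ∧ d ∈ Finset.Ioc 0 N
      · have hd0 : 0 < d := (Finset.mem_Ioc.mp hcond.2).1
        have hdR : (0:ℝ) < (d:ℝ) := by exact_mod_cast hd0
        rw [hf]
        simp only
        rw [if_pos hcond, norm_mul, norm_div, norm_div, norm_one,
          Complex.norm_natCast_cpow_of_pos hd0, Complex.norm_natCast, Complex.norm_natCast]
        have h1 : ((N / d : ℕ) : ℝ) / (N : ℝ) ≤ 1 / (d : ℝ) := by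
          rcases Nat.eq_zero_or_pos N with rfl | hN
          · simp
            try positivity
          · have hNR : (0:ℝ) < (N:ℝ) := by exact_mod_cast hN
            have h2 : ((N / d : ℕ) : ℝ) ≤ (N : ℝ) / (d : ℝ) := Nat.cast_div_le
            have h3 : ((N : ℝ) / (d : ℝ)) / (N : ℝ) = 1 / (d : ℝ) := by
              field_simp
            calc ((N / d : ℕ) : ℝ) / (N : ℝ) ≤ ((N : ℝ) / (d : ℝ)) / (N : ℝ) := by gcongr
              _ = 1 / (d : ℝ) := h3
        have h4 : (1 / (d:ℝ) ^ (s.re - 1)) * (1 / (d:ℝ)) = (d:ℝ) ^ (-s.re) := by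
          rw [one_div ((d:ℝ) ^ (s.re - 1)), ← Real.rpow_neg hdR.le,
            one_div (d:ℝ), ← Real.rpow_neg_one (d:ℝ), ← Real.rpow_add hdR]
          congr 1
          ring
        calc (1 / (d:ℝ) ^ (s.re - 1)) * (((N / d : ℕ) : ℝ) / (N : ℝ))
            ≤ (1 / (d:ℝ) ^ (s.re - 1)) * (1 / (d:ℝ)) := by
              apply mul_le_mul_of_nonneg_left h1
              positivity
          _ = (d:ℝ) ^ (-s.re) := h4
      · rw [hf]
        simp only
        rw [if_neg hcond, norm_zero]
        positivity
  rw [show riemannZeta s / riemannZeta (2 * s) = ∑' d, g d from (tsum_sqind hs).symm]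
  exact hmain.congr (fun N => (finite_identity N).symm)
end

section
/- For every complex number s with real part greater than 1, the Cesàro means (1/N) ∑_{m=1}^{N} ∏_{p prime, p ∣ m} (1 − 1/p^{s-1}) converge, as N → ∞, to 1/ζ(s), where ζ is the Riemann zeta function. -/
open Filter Finset
open scoped ArithmeticFunction.Moebius

open Complex ArithmeticFunction in
open scoped LSeries.notation in
private lemma cesaro_aux_squarefree_rad (m : ℕ) :
    Squarefree (∏ p ∈ m.primeFactors, p) := by
  have h : ∀ s : Finset ℕ, (∀ p ∈ s, p.Prime) → Squarefree (∏ p ∈ s, p) := by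
    intro s
    induction s using Finset.induction_on with
    | empty => intro _; simp only [Finset.prod_empty]; exact squarefree_one
    | @insert p s hp ih =>
      intro hprime
      rw [Finset.prod_insert hp]
      have hpp : p.Prime := hprime p (Finset.mem_insert_self _ _)
      have hcop : Nat.Coprime p (∏ q ∈ s, q) := by
        refine Nat.Coprime.prod_right fun q hq => ?_
        exact (Nat.coprime_primes hpp (hprime q (Finset.mem_insert_of_mem hq))).mpr
          (fun h => hp (h ▸ hq))
      exact (Nat.squarefree_mul hcop).mpr
        ⟨hpp.squarefree, ih fun q hq => hprime q (Finset.mem_insert_of_mem hq)⟩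
  exact h _ fun p hp => Nat.prime_of_mem_primeFactors hp

open Complex ArithmeticFunction in
open scoped LSeries.notation in
/-- The arithmetic function `d ↦ 1 / d ^ (s-1)`. -/
private noncomputable def cesaroF (s : ℂ) : ArithmeticFunction ℂ :=
  ⟨fun d => if d = 0 then 0 else 1 / (d : ℂ) ^ (s - 1), by simp⟩

open Complex ArithmeticFunction in
private lemma cesaroF_mult (s : ℂ) : (cesaroF s).IsMultiplicative := by
  constructor
  · simp [cesaroF]
  · intro m n hmn
    rcases eq_or_ne m 0 with rfl | hm
    · simp [cesaroF]
    rcases eq_or_ne n 0 with rfl | hn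
    · simp [cesaroF]
    simp only [cesaroF, ArithmeticFunction.coe_mk, if_neg hm, if_neg hn,
      if_neg (mul_ne_zero hm hn)]
    have h := Complex.mul_cpow_ofReal_nonneg (Nat.cast_nonneg m) (Nat.cast_nonneg n) (s - 1)
    push_cast at h ⊢
    rw [h, one_div, one_div, one_div, mul_inv]

open Complex ArithmeticFunction in
open scoped LSeries.notation in
private lemma cesaro_prod_eq_sum (s : ℂ) {m : ℕ} (hm : m ≠ 0) :
    ∏ p ∈ m.primeFactors, (1 - 1 / (p : ℂ) ^ (s - 1)) =
      ∑ d ∈ m.divisors, LSeries.term ↗μ (s - 1) d := by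
  set r : ℕ := ∏ p ∈ m.primeFactors, p with hr
  have hrsf : Squarefree r := cesaro_aux_squarefree_rad m
  have hrpf : r.primeFactors = m.primeFactors :=
    Nat.primeFactors_prod fun p hp => Nat.prime_of_mem_primeFactors hp
  have h1 : ∏ p ∈ m.primeFactors, (1 - 1 / (p : ℂ) ^ (s - 1)) =
      ∑ d ∈ r.divisors, (μ d : ℂ) * cesaroF s d := by
    rw [← hrpf]
    have := (cesaroF_mult s).prodPrimeFactors_one_sub_of_squarefree (cesaroF s) hrsf
    rw [← this]
    refine Finset.prod_congr rfl fun p hp => ?_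
    have hp' : p.Prime := Nat.prime_of_mem_primeFactors hp
    simp [cesaroF, hp'.ne_zero]
  rw [h1]
  have hterm : ∀ d ∈ m.divisors, (μ d : ℂ) * cesaroF s d = LSeries.term ↗μ (s - 1) d := by
    intro d hd
    have hd0 : d ≠ 0 := Nat.pos_of_mem_divisors hd |>.ne'
    rw [LSeries.term_of_ne_zero hd0]
    simp [cesaroF, hd0, div_eq_mul_inv, mul_comm]
  have hsub : r.divisors ⊆ m.divisors :=
    Nat.divisors_subset_of_dvd hm (hr ▸ Nat.prod_primeFactors_dvd m)
  rw [Finset.sum_subset hsub ?_, Finset.sum_congr rfl hterm]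
  intro d hd hdr
  rcases eq_or_ne (μ d) 0 with h0 | h0
  · simp [h0]
  exfalso
  apply hdr
  have hdsf : Squarefree d := by
    by_contra hc
    exact h0 (ArithmeticFunction.moebius_eq_zero_of_not_squarefree hc)
  have hdvd : d ∣ r := by
    have : d.primeFactors ⊆ m.primeFactors :=
      Nat.primeFactors_mono (Nat.dvd_of_mem_divisors hd) hm
    calc d = ∏ p ∈ d.primeFactors, p := (Nat.prod_primeFactors_of_squarefree hdsf).symm
      _ ∣ ∏ p ∈ m.primeFactors, p := Finset.prod_dvd_prod_of_subset _ _ _ this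
  exact Nat.mem_divisors.mpr ⟨hdvd, hrsf.ne_zero⟩

open Complex ArithmeticFunction in
open scoped LSeries.notation in
theorem cesaro_euler_like_minus_complex (s : ℂ) (hs : 1 < s.re) :
    Tendsto (fun N : ℕ =>
        (1 / (N : ℂ)) * ∑ m ∈ Finset.Icc 1 N,
          ∏ p ∈ m.primeFactors, (1 - 1 / (p : ℂ) ^ (s - 1)))
      atTop (nhds (1 / riemannZeta s)) := by
  set a : ℕ → ℂ := LSeries.term ↗μ (s - 1) with ha
  set F : ℕ → ℕ → ℂ := fun N d =>
    if d ∈ Finset.Ioc 0 N then a d * (((N / d : ℕ) : ℂ) / (N : ℂ)) else 0 with hF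
  -- Step 1: rewrite the Cesàro mean as a tsum
  have key : ∀ N : ℕ, (1 / (N : ℂ)) * ∑ m ∈ Finset.Icc 1 N,
      ∏ p ∈ m.primeFactors, (1 - 1 / (p : ℂ) ^ (s - 1)) = ∑' d, F N d := by
    intro N
    have h1 : Finset.Icc 1 N = Finset.Ioc 0 N := Finset.Icc_add_one_left_eq_Ioc 0 N
    have h2 : ∀ m ∈ Finset.Ioc 0 N,
        ∏ p ∈ m.primeFactors, (1 - 1 / (p : ℂ) ^ (s - 1)) =
          ∑ d ∈ Finset.Ioc 0 N, if d ∣ m then a d else 0 := by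
      intro m hm
      rw [Finset.mem_Ioc] at hm
      rw [cesaro_prod_eq_sum s hm.1.ne', ← Finset.sum_filter]
      congr 1
      ext d
      simp only [Nat.mem_divisors, Finset.mem_filter, Finset.mem_Ioc]
      constructor
      · rintro ⟨hd, -⟩
        exact ⟨⟨Nat.pos_of_dvd_of_pos hd hm.1, le_trans (Nat.le_of_dvd hm.1 hd) hm.2⟩, hd⟩
      · rintro ⟨-, hd⟩
        exact ⟨hd, hm.1.ne'⟩
    rw [h1, Finset.sum_congr rfl h2, Finset.sum_comm]
    have h3 : ∀ d ∈ Finset.Ioc 0 N,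
        (∑ m ∈ Finset.Ioc 0 N, if d ∣ m then a d else 0) = ((N / d : ℕ) : ℂ) * a d := by
      intro d _
      rw [← Finset.sum_filter, Finset.sum_const, Nat.Ioc_filter_dvd_card_eq_div,
        nsmul_eq_mul]
    rw [Finset.sum_congr rfl h3, Finset.mul_sum]
    rw [tsum_eq_sum (s := Finset.Ioc 0 N) (f := F N) (fun d hd => by simp only [hF]; exact if_neg hd)]
    refine Finset.sum_congr rfl fun d hd => ?_
    rw [hF]
    simp only [hd, if_true]
    ring
  simp only [funext key]
  -- Step 2: dominated convergence
  have hzeta : (1 : ℂ) / riemannZeta s = ∑' d, LSeries.term ↗μ s d := by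
    have h1 := LSeries_zeta_mul_Lseries_moebius hs
    rw [LSeries_zeta_eq_riemannZeta hs] at h1
    have hz : riemannZeta s ≠ 0 := riemannZeta_ne_zero_of_one_lt_re hs
    have : LSeries ↗μ s = 1 / riemannZeta s := by
      field_simp
      linear_combination h1
    rw [← this]
    rfl
  rw [hzeta]
  refine tendsto_tsum_of_dominated_convergence (bound := fun d => (d : ℝ) ^ (-s.re)) ?_ ?_ ?_
  · exact (Real.summable_nat_rpow).mpr (by linarith)
  · -- pointwise convergence
    intro d
    rcases eq_or_ne d 0 with rfl | hd0
    · simp only [hF, Finset.mem_Ioc, lt_irrefl, false_and, if_false]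
      rw [LSeries.term_zero]
      exact tendsto_const_nhds
    have hd0' : (0 : ℕ) < d := Nat.pos_of_ne_zero hd0
    have hdC : (d : ℂ) ≠ 0 := Nat.cast_ne_zero.mpr hd0
    -- the limit of (N/d)/N is 1/d
    have hlim : Tendsto (fun N : ℕ => (((N / d : ℕ) : ℝ) / (N : ℝ))) atTop
        (nhds ((d : ℝ)⁻¹)) := by
      have h1 : Tendsto (fun x : ℝ => ((⌊(d : ℝ)⁻¹ * x⌋₊ : ℝ) / x)) atTop
          (nhds ((d : ℝ)⁻¹)) :=
        tendsto_nat_floor_mul_div_atTop (by positivity)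
      have h2 := h1.comp tendsto_natCast_atTop_atTop (α := ℕ)
      convert h2 using 2 with N
      rw [Function.comp_apply]
      congr 2
      rw [inv_mul_eq_div, Nat.floor_div_natCast, Nat.floor_natCast]
    have hlimC : Tendsto (fun N : ℕ => (((N / d : ℕ) : ℂ) / (N : ℂ))) atTop
        (nhds (((d : ℝ)⁻¹ : ℝ) : ℂ)) := by
      have := (Complex.continuous_ofReal.tendsto _).comp hlim
      convert this using 2 with N
      rw [Function.comp_apply]
      push_cast
      ring
    have hlimC' : Tendsto (fun N : ℕ => F N d) atTop (nhds (a d * (d : ℂ)⁻¹)) := by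
      have h3 : Tendsto (fun N : ℕ => a d * (((N / d : ℕ) : ℂ) / (N : ℂ))) atTop
          (nhds (a d * (d : ℂ)⁻¹)) := by
        have := hlimC.const_mul (a d)
        simpa using this
      refine h3.congr' ?_
      filter_upwards [eventually_ge_atTop d] with N hN
      rw [hF]
      simp only [Finset.mem_Ioc, hd0', hN, and_self, if_true]
    convert hlimC' using 1
    rw [ha, LSeries.term_of_ne_zero hd0, LSeries.term_of_ne_zero hd0]
    have hcpow : (d : ℂ) ^ s = (d : ℂ) ^ (s - 1) * (d : ℂ) := by
      have h := Complex.cpow_add (s - 1) 1 hdC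
      rw [sub_add_cancel, Complex.cpow_one] at h
      exact h
    have hne : (d : ℂ) ^ (s - 1) ≠ 0 := by
      rw [Ne, Complex.cpow_eq_zero_iff]
      tauto
    rw [hcpow]
    field_simp
  · -- uniform bound
    filter_upwards with N
    intro d
    simp only [hF]
    split_ifs with hd
    · rw [Finset.mem_Ioc] at hd
      have hd0 : d ≠ 0 := hd.1.ne'
      have hdpos : (0 : ℝ) < (d : ℝ) := by exact_mod_cast hd.1
      rw [norm_mul, ha, LSeries.term_of_ne_zero hd0, norm_div, norm_div]
      have hmu : ‖((μ d : ℤ) : ℂ)‖ ≤ 1 := by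
        rw [Complex.norm_intCast]
        exact_mod_cast ArithmeticFunction.abs_moebius_le_one
      have hcpow : ‖(d : ℂ) ^ (s - 1)‖ = (d : ℝ) ^ (s.re - 1) := by
        rw [Complex.norm_natCast_cpow_of_pos hd.1, Complex.sub_re, Complex.one_re]
      have hfrac : ‖((N / d : ℕ) : ℂ)‖ / ‖(N : ℂ)‖ ≤ (d : ℝ)⁻¹ := by
        rw [Complex.norm_natCast, Complex.norm_natCast]
        rcases Nat.eq_zero_or_pos N with rfl | hN
        · simp
        have hNpos : (0 : ℝ) < (N : ℝ) := by exact_mod_cast hN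
        rw [div_le_iff₀ hNpos]
        calc ((N / d : ℕ) : ℝ) ≤ (N : ℝ) / (d : ℝ) := Nat.cast_div_le
          _ = (d : ℝ)⁻¹ * (N : ℝ) := by ring
      calc ‖((μ d : ℤ) : ℂ)‖ / ‖(d : ℂ) ^ (s - 1)‖ * (‖((N / d : ℕ) : ℂ)‖ / ‖(N : ℂ)‖)
          ≤ 1 / ((d : ℝ) ^ (s.re - 1)) * (d : ℝ)⁻¹ := by
            refine mul_le_mul ?_ hfrac (by positivity) (by positivity)
            rw [hcpow]
            gcongr
        _ = (d : ℝ) ^ (-s.re) := by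
            rw [one_div, ← Real.rpow_neg_one (d : ℝ), ← Real.rpow_neg hdpos.le,
              ← Real.rpow_add hdpos]
            congr 1
            ring
    · simp only [norm_zero]
      positivity
end

section
/- Let χ be a Dirichlet character and s a complex number with real part greater than 1. Then the Cesàro means (1/N) ∑_{m=1}^{N} ∏_{p prime, p ∣ m} (1 − χ(p)/p^{s-1}) converge, as N → ∞, to 1/L(χ, s), where L(χ, s) = ∑_{m=1}^{∞} χ(m)/m^s is the Dirichlet L-series of χ. -/
open Filter Finset Complex ArithmeticFunction Topology
open scoped LSeries.notation
open scoped ArithmeticFunction.Moebius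

section aux
lemma sqfree_prod_primes {t : Finset ℕ} (ht : ∀ p ∈ t, p.Prime) :
    Squarefree (∏ p ∈ t, p) := by
  classical
  induction t using Finset.induction with
  | empty => simp [squarefree_one]
  | @insert p t hp ih =>
    rw [Finset.prod_insert hp]
    have hpp := ht p (Finset.mem_insert_self p t)
    have hco : Nat.Coprime p (∏ q ∈ t, q) := by
      refine Nat.Coprime.prod_right fun q hq => ?_
      exact (Nat.coprime_primes hpp (ht q (Finset.mem_insert_of_mem hq))).mpr
        (fun h => hp (h ▸ hq))
    rw [Nat.squarefree_mul hco]
    exact ⟨hpp.squarefree, ih fun q hq => ht q (Finset.mem_insert_of_mem hq)⟩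

lemma stepA {n : ℕ} (χ : DirichletCharacter ℂ n) {s : ℂ} (hs : s ≠ 1)
    {m : ℕ} (hm : m ≠ 0) :
    ∏ p ∈ m.primeFactors, (1 - χ p / (p : ℂ) ^ (s - 1))
      = ∑ d ∈ m.divisors, (μ d : ℂ) * (χ d / (d : ℂ) ^ (s - 1)) := by
  classical
  have hs1 : s - 1 ≠ 0 := sub_ne_zero.mpr hs
  set f : ArithmeticFunction ℂ :=
    ⟨fun d => χ d / (d : ℂ) ^ (s - 1), by simp [zero_cpow hs1]⟩ with hf
  have hfap : ∀ d : ℕ, f d = χ d / (d : ℂ) ^ (s - 1) := fun d => rfl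
  have hfm : f.IsMultiplicative := by
    refine ⟨by simp [hfap], fun {a b} hab => ?_⟩
    simp only [hfap]
    have hcast : ((a * b : ℕ) : ℂ) ^ (s - 1) = (a : ℂ) ^ (s - 1) * (b : ℂ) ^ (s - 1) := by
      push_cast
      rw [show ((a : ℂ) * b) = ((a : ℝ) : ℂ) * ((b : ℝ) : ℂ) by push_cast; ring,
        mul_cpow_ofReal_nonneg (Nat.cast_nonneg a) (Nat.cast_nonneg b)]
      push_cast; ring_nf
    rw [Nat.cast_mul, map_mul, hcast, div_mul_div_comm]
  set r := ∏ p ∈ m.primeFactors, p with hr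
  have hprimes : ∀ p ∈ m.primeFactors, p.Prime := fun p hp => Nat.prime_of_mem_primeFactors hp
  have hrsq : Squarefree r := sqfree_prod_primes hprimes
  have hrp : r.primeFactors = m.primeFactors := Nat.primeFactors_prod hprimes
  have key := hfm.prodPrimeFactors_one_sub_of_squarefree f hrsq
  rw [hrp] at key
  simp only [hfap] at key
  rw [key]
  refine Finset.sum_subset (Nat.divisors_subset_of_dvd hm (Nat.prod_primeFactors_dvd m)) ?_
  intro d hd hdr
  have hdm : d ∣ m := Nat.dvd_of_mem_divisors hd
  have hd0 : d ≠ 0 := Nat.pos_of_mem_divisors hd |>.ne'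
  have hnsq : ¬ Squarefree d := by
    intro hsq
    apply hdr
    refine Nat.mem_divisors.mpr ⟨?_, hrsq.ne_zero⟩
    calc d = ∏ p ∈ d.primeFactors, p := (Nat.prod_primeFactors_of_squarefree hsq).symm
      _ ∣ r := Finset.prod_dvd_prod_of_subset _ _ _ (Nat.primeFactors_mono hdm hm)
  rw [ArithmeticFunction.moebius_eq_zero_of_not_squarefree hnsq]
  simp

lemma stepB (g : ℕ → ℂ) (N : ℕ) :
    ∑ m ∈ Finset.Icc 1 N, ∑ d ∈ m.divisors, g d
      = ∑ d ∈ Finset.Icc 1 N, ((N / d : ℕ) : ℂ) * g d := by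
  classical
  have h1 : ∀ m ∈ Finset.Icc 1 N, ∑ d ∈ m.divisors, g d
      = ∑ d ∈ Finset.Icc 1 N, if d ∣ m then g d else 0 := by
    intro m hm
    rw [Finset.mem_Icc] at hm
    rw [Finset.sum_ite, Finset.sum_const_zero, add_zero]
    refine (Finset.sum_congr ?_ fun _ _ => rfl)
    ext d
    simp only [Nat.mem_divisors, Finset.mem_filter, Finset.mem_Icc]
    constructor
    · rintro ⟨hdm, hm0⟩
      exact ⟨⟨Nat.one_le_iff_ne_zero.mpr (fun h => by simp [h] at hdm; omega),
        le_trans (Nat.le_of_dvd (by omega) hdm) hm.2⟩, hdm⟩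
    · rintro ⟨_, hdm⟩
      exact ⟨hdm, by omega⟩
  rw [Finset.sum_congr rfl h1, Finset.sum_comm]
  refine Finset.sum_congr rfl fun d _ => ?_
  rw [Finset.sum_ite, Finset.sum_const_zero, add_zero, Finset.sum_const, nsmul_eq_mul]
  congr 1
  have : Finset.Icc 1 N = Finset.Ioc 0 N := rfl
  rw [this]
  norm_cast
  exact Nat.Ioc_filter_dvd_card_eq_div N d

lemma div_floor_tendsto (d : ℕ) (hd : d ≠ 0) :
    Tendsto (fun N : ℕ => ((N / d : ℕ) : ℝ) / N) atTop (𝓝 (1 / d)) := by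
  have hlow : Tendsto (fun N : ℕ => 1 / (d : ℝ) - 1 / N) atTop (𝓝 (1 / d)) := by
    simpa using (tendsto_const_nhds (x := 1 / (d : ℝ))).sub
      tendsto_one_div_atTop_nhds_zero_nat
  refine tendsto_of_tendsto_of_tendsto_of_le_of_le' hlow tendsto_const_nhds ?_ ?_
  · filter_upwards [eventually_ge_atTop 1] with N hN
    have hN0 : (0 : ℝ) < N := by positivity
    have hd0 : (0 : ℝ) < d := by positivity
    have key : (N : ℝ) < d * ((N / d : ℕ) : ℝ) + d := by
      have := Nat.lt_mul_div_succ N (Nat.pos_of_ne_zero hd)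
      calc (N : ℝ) < (d * (N / d + 1) : ℕ) := by exact_mod_cast this
        _ = d * ((N / d : ℕ) : ℝ) + d := by push_cast; ring
    rw [div_sub_div _ _ (ne_of_gt hd0) (ne_of_gt hN0), div_le_div_iff₀ (by positivity) hN0]
    nlinarith [Nat.cast_nonneg (α := ℝ) (N / d)]
  · filter_upwards [eventually_ge_atTop 1] with N hN
    have hN0 : (0 : ℝ) < N := by positivity
    have hd0 : (0 : ℝ) < d := by positivity
    rw [div_le_div_iff₀ hN0 hd0]
    calc ((N / d : ℕ) : ℝ) * d = ((N / d * d : ℕ) : ℝ) := by push_cast; ring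
      _ ≤ (N : ℝ) := by exact_mod_cast Nat.div_mul_le_self N d
      _ = 1 * N := (one_mul _).symm
end aux

theorem cesaro_dirichlet_minus (n : ℕ) [NeZero n] (χ : DirichletCharacter ℂ n)
    (s : ℂ) (hs : 1 < s.re) :
    Tendsto (fun N : ℕ =>
        (1 / (N : ℂ)) * ∑ m ∈ Finset.Icc 1 N,
          ∏ p ∈ m.primeFactors, (1 - χ p / (p : ℂ) ^ (s - 1)))
      atTop (nhds (1 / LSeries (fun m : ℕ => χ m) s)) := by
  classical
  have hs1 : s ≠ 1 := fun h => by simp [h] at hs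
  set g : ℕ → ℂ := fun d => (μ d : ℂ) * (χ d / (d : ℂ) ^ (s - 1)) with hg
  set F : ℕ → ℕ → ℂ := fun N d => ((N / d : ℕ) : ℂ) / N * g d with hF
  set T : ℕ → ℂ := fun d => LSeries.term (↗χ * ↗μ) s d with hT
  have hg0 : g 0 = 0 := by simp [hg]
  have htd : ∀ d : ℕ, d ≠ 0 → T d = (1 / (d : ℂ)) * g d := by
    intro d hd
    have hd0 : (d : ℂ) ≠ 0 := Nat.cast_ne_zero.mpr hd
    have hds : (d : ℂ) ^ s ≠ 0 := by
      simp [Complex.cpow_def_of_ne_zero hd0, Complex.exp_ne_zero]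
    have hsub : (d : ℂ) ^ (s - 1) = (d : ℂ) ^ s / d := by
      rw [Complex.cpow_sub _ _ hd0, Complex.cpow_one]
    rw [hT]
    simp only [LSeries.term, if_neg hd, hg, Pi.mul_apply]
    rw [hsub]
    field_simp
  -- summability of the L-series of χ·μ
  have hχμ : LSeriesSummable (↗χ * ↗μ) s :=
    DirichletCharacter.LSeriesSummable_mul χ <|
      ArithmeticFunction.LSeriesSummable_moebius_iff.mpr hs
  have hsumbound : Summable fun d => ‖T d‖ := summable_norm_iff.mpr hχμ
  -- pointwise convergence
  have hptwise : ∀ d : ℕ, Tendsto (fun N => F N d) atTop (𝓝 (T d)) := by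
    intro d
    rcases eq_or_ne d 0 with rfl | hd
    · have : (fun N => F N 0) = fun _ => (0 : ℂ) := by
        funext N; simp [hF, hg0]
      rw [this, hT]
      simp [LSeries.term]
    · rw [htd d hd]
      have hre := div_floor_tendsto d hd
      have hcplx : Tendsto (fun N : ℕ => ((N / d : ℕ) : ℂ) / N) atTop (𝓝 (1 / d)) := by
        have heq : (fun N : ℕ => ((N / d : ℕ) : ℂ) / N)
            = fun N : ℕ => ((((N / d : ℕ) : ℝ) / N : ℝ) : ℂ) := by
          funext N; push_cast; ring
        rw [heq, show ((1 : ℂ) / d) = (((1 / d : ℝ)) : ℂ) by push_cast; ring]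
        exact (Complex.continuous_ofReal.tendsto _).comp hre
      exact hcplx.mul_const (g d)
  -- domination
  have hbd : ∀ᶠ N in atTop, ∀ d : ℕ, ‖F N d‖ ≤ ‖T d‖ := by
    filter_upwards [eventually_ge_atTop 1] with N hN
    intro d
    rcases eq_or_ne d 0 with rfl | hd
    · simp [hF, hg0]
    · rw [htd d hd, hF]
      simp only [norm_mul, norm_div, Complex.norm_natCast, norm_one]
      refine mul_le_mul_of_nonneg_right ?_ (norm_nonneg _)
      have hN0 : (0 : ℝ) < N := by positivity
      have hd0 : (0 : ℝ) < d := by positivity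
      rw [div_le_div_iff₀ hN0 hd0]
      calc ((N / d : ℕ) : ℝ) * d = ((N / d * d : ℕ) : ℝ) := by push_cast; ring
        _ ≤ (N : ℝ) := by exact_mod_cast Nat.div_mul_le_self N d
        _ = 1 * N := (one_mul _).symm
  have hmain : Tendsto (fun N => ∑' d, F N d) atTop (𝓝 (∑' d, T d)) :=
    tendsto_tsum_of_dominated_convergence hsumbound hptwise hbd
  -- identify the limit
  have hlim : ∑' d, T d = 1 / LSeries (fun m : ℕ => χ m) s := by
    have h1 : ∑' d, T d = LSeries (↗χ * ↗μ) s := rfl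
    rw [h1]
    exact eq_one_div_of_mul_eq_one_right (DirichletCharacter.LSeries.mul_mu_eq_one χ hs)
  rw [← hlim]
  refine hmain.congr fun N => ?_
  -- identify the partial Cesàro sums
  have hA : ∀ m ∈ Finset.Icc 1 N,
      ∏ p ∈ m.primeFactors, (1 - χ p / (p : ℂ) ^ (s - 1)) = ∑ d ∈ m.divisors, g d := by
    intro m hm
    rw [Finset.mem_Icc] at hm
    exact stepA χ hs1 (by omega)
  have hvanish : ∀ d ∉ Finset.Icc 1 N, F N d = 0 := by
    intro d hd
    rw [Finset.mem_Icc] at hd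
    rcases eq_or_ne d 0 with rfl | hd0
    · simp [hF, hg0]
    · have hdN : N < d := by omega
      simp [hF, Nat.div_eq_of_lt hdN]
  rw [tsum_eq_sum hvanish]
  rw [Finset.sum_congr rfl hA, stepB g N, Finset.mul_sum]
  refine Finset.sum_congr rfl fun d _ => ?_
  rw [hF]
  ring
end
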